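/- Let 2 < p < q and let f̄ : ℝⁿ → ℝ be defined by f̄(x) = f(|x|), where f(t) = a·t^p + b for t > 1 and f(t) = c·t^q for 0 ≤ t ≤ 1, with a+b=c, ap=cq, c > 0. Then there exists a constant c₁ > 0, independent of x and y, such that for all x, y ∈ ℝⁿ: f̄(x) − f̄(y) − ⟨∇f̄(y), x−y⟩ ≥ c₁ · min(|x−y|^p, |x−y|^q). -/

import Mathlib

open RealInnerProductSpace Set

/-- Bernoulli-type lower bound: for `α ≥ 1`, `0 ≤ w ≤ v`,
`v^α - w^α ≥ v^(α-1) * (v-w) / 2^α`. -/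
private lemma bern_aux {α v w : ℝ} (hα : 1 ≤ α) (hw : 0 ≤ w) (hwv : w ≤ v) :
    v ^ (α - 1) * (v - w) / 2 ^ α ≤ v ^ α - w ^ α := by
  have hα0 : (0:ℝ) < α := lt_of_lt_of_le one_pos hα
  have hv : 0 ≤ v := hw.trans hwv
  have h2α0 : (0:ℝ) < 2 ^ α := Real.rpow_pos_of_pos two_pos α
  have h2α : (2:ℝ) ≤ 2 ^ α := by
    calc (2:ℝ) = 2 ^ (1:ℝ) := (Real.rpow_one 2).symm
    _ ≤ 2 ^ α := Real.rpow_le_rpow_of_exponent_le one_le_two hα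
  rcases eq_or_lt_of_le hv with hv0 | hv0
  · have hw0 : w = 0 := le_antisymm (hwv.trans_eq hv0.symm) hw
    rw [← hv0, hw0]
    rw [Real.zero_rpow hα0.ne']
    simp
  have hX0 : (0:ℝ) < v ^ α := Real.rpow_pos_of_pos hv0 α
  have hV0 : (0:ℝ) ≤ v ^ (α - 1) := Real.rpow_nonneg hv _
  have hvα : v ^ α = v ^ (α - 1) * v := by
    rw [← Real.rpow_add_one hv0.ne' (α - 1)]; norm_num
  rcases le_or_gt w (v / 2) with hcase | hcase
  · have hwb : w ^ α ≤ v ^ α / 2 ^ α := by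
      calc w ^ α ≤ (v / 2) ^ α := Real.rpow_le_rpow hw hcase hα0.le
      _ = v ^ α / 2 ^ α := Real.div_rpow hv (by norm_num) α
    have hwb' : w ^ α * 2 ^ α ≤ v ^ α := by
      rw [← le_div_iff₀ h2α0]; exact hwb
    have h1 : v ^ (α - 1) * (v - w) ≤ v ^ α := by
      rw [hvα]
      have := mul_le_mul_of_nonneg_left (show v - w ≤ v by linarith) hV0
      linarith
    rw [div_le_iff₀ h2α0]
    nlinarith [Real.rpow_nonneg hw α]
  · have hw0 : 0 < w := lt_of_le_of_lt (by linarith) hcase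
    have hY0 : (0:ℝ) < w ^ α := Real.rpow_pos_of_pos hw0 α
    have hZ0 : (0:ℝ) ≤ w ^ (α - 1) := Real.rpow_nonneg hw _
    have hvw : (0:ℝ) ≤ v - w := by linarith
    have hB := one_add_mul_self_le_rpow_one_add (s := (v - w) / w)
      (le_trans (by norm_num : (-1:ℝ) ≤ 0) (by positivity)) hα
    rw [show 1 + (v - w) / w = v / w by field_simp; ring, Real.div_rpow hv hw] at hB
    have hmain : w ^ α + α * (v - w) * w ^ (α - 1) ≤ v ^ α := by
      have h := mul_le_mul_of_nonneg_right hB hY0.le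
      rw [div_mul_cancel₀ _ hY0.ne'] at h
      have hws : w ^ (α - 1) = w ^ α / w := Real.rpow_sub_one hw0.ne' α
      calc w ^ α + α * (v - w) * w ^ (α - 1)
          = (1 + α * ((v - w) / w)) * w ^ α := by rw [hws]; field_simp
        _ ≤ v ^ α := h
    have hZ : v ^ (α - 1) / 2 ^ α ≤ w ^ (α - 1) := by
      have hV0' : (0:ℝ) < v ^ (α - 1) := Real.rpow_pos_of_pos hv0 _
      have h1 : v ^ (α - 1) / 2 ^ α ≤ v ^ (α - 1) / 2 ^ (α - 1) := by
        rw [div_le_div_iff_of_pos_left hV0' h2α0 (Real.rpow_pos_of_pos two_pos _)]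
        exact Real.rpow_le_rpow_of_exponent_le one_le_two (by linarith)
      have h2 : v ^ (α - 1) / 2 ^ (α - 1) = (v / 2) ^ (α - 1) :=
        (Real.div_rpow hv (by norm_num) _).symm
      have h3 : (v / 2) ^ (α - 1) ≤ w ^ (α - 1) :=
        Real.rpow_le_rpow (by positivity) hcase.le (by linarith)
      linarith [h1.trans_eq h2 |>.trans h3]
    have hint1 : (v - w) * (v ^ (α - 1) / 2 ^ α) ≤ (v - w) * w ^ (α - 1) :=
      mul_le_mul_of_nonneg_left hZ hvw
    have hint2 : (0:ℝ) ≤ (α - 1) * (v - w) * w ^ (α - 1) :=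
      mul_nonneg (mul_nonneg (by linarith) hvw) hZ0
    have : v ^ (α - 1) * (v - w) / 2 ^ α = (v - w) * (v ^ (α - 1) / 2 ^ α) := by ring
    rw [this]
    nlinarith [hint1, hint2, hmain]

private lemma div_le_div_of_le_den {a b c : ℝ} (ha : 0 ≤ a) (hc : 0 < c) (h : c ≤ b) :
    a / b ≤ a / c := by
  have hb : 0 < b := lt_of_lt_of_le hc h
  rw [div_le_div_iff₀ hb hc]
  exact mul_le_mul_of_nonneg_left h ha

set_option maxHeartbeats 2000000 in
theorem stmt3 (n : ℕ) (p q a b c : ℝ) (hp : 2 < p) (hpq : p < q)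
    (hc : 0 < c) (habc : a + b = c) (hapcq : a * p = c * q)
    (f : ℝ → ℝ)
    (hf₁ : ∀ t : ℝ, 1 < t → f t = a * t ^ p + b)
    (hf₂ : ∀ t : ℝ, 0 ≤ t → t ≤ 1 → f t = c * t ^ q) :
    ∃ c₁ > (0:ℝ), ∀ x y : EuclideanSpace ℝ (Fin n),
      f ‖x‖ - f ‖y‖ - ⟪gradient (fun z : EuclideanSpace ℝ (Fin n) => f ‖z‖) y, x - y⟫ ≥
        c₁ * min (‖x - y‖ ^ p) (‖x - y‖ ^ q) := by
  have hq2 : 2 < q := lt_trans hp hpq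
  have hp0 : (0:ℝ) < p := by linarith
  have hq0 : (0:ℝ) < q := by linarith
  have hp1 : (1:ℝ) < p := by linarith
  have hq1 : (1:ℝ) < q := by linarith
  have hA : (0:ℝ) < c * q := by positivity
  have H : ∀ {u v : ℝ}, u ≤ v → (2:ℝ) ^ u ≤ 2 ^ v := fun h =>
    Real.rpow_le_rpow_of_exponent_le one_le_two h
  have pos2 : ∀ u : ℝ, (0:ℝ) < 2 ^ u := fun u => Real.rpow_pos_of_pos two_pos u
  have h2two : (2:ℝ) ^ (2:ℝ) = 4 := by
    rw [Real.rpow_two]; norm_num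
  have h4 : (4:ℝ) ≤ 2 ^ q := by
    rw [← h2two]; exact H (by linarith)
  have h42 : ∀ e : ℝ, 0 ≤ e → e ≤ q → (4:ℝ) ^ e ≤ 2 ^ (2*q) := by
    intro e he heq
    have h1 : (4:ℝ) ^ e = 2 ^ (2*e) := by
      rw [Real.rpow_mul (by norm_num : (0:ℝ) ≤ 2) 2 e, h2two]
    rw [h1]; exact H (by linarith)
  set μ : ℝ → ℝ := fun t => min (t ^ (p-1)) (t ^ (q-1)) with hμdef
  set m : ℝ → ℝ := fun t => min (t ^ (p-2)) (t ^ (q-2)) with hmdef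
  have hμlow : ∀ t : ℝ, 0 ≤ t → t ≤ 1 → μ t = t ^ (q-1) := by
    intro t h0 h1
    simp only [hμdef]
    exact min_eq_right (Real.rpow_le_rpow_of_exponent_ge' h0 h1 (by linarith) (by linarith))
  have hμhigh : ∀ t : ℝ, 1 ≤ t → μ t = t ^ (p-1) := by
    intro t h1
    simp only [hμdef]
    exact min_eq_left (Real.rpow_le_rpow_of_exponent_le h1 (by linarith))
  have hmlow : ∀ t : ℝ, 0 ≤ t → t ≤ 1 → m t = t ^ (q-2) := by
    intro t h0 h1
    simp only [hmdef]
    exact min_eq_right (Real.rpow_le_rpow_of_exponent_ge' h0 h1 (by linarith) (by linarith))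
  have hmhigh : ∀ t : ℝ, 1 ≤ t → m t = t ^ (p-2) := by
    intro t h1
    simp only [hmdef]
    exact min_eq_left (Real.rpow_le_rpow_of_exponent_le h1 (by linarith))
  have hμmono : ∀ {x y : ℝ}, 0 ≤ x → x ≤ y → μ x ≤ μ y := by
    intro x y hx hxy
    exact min_le_min (Real.rpow_le_rpow hx hxy (by linarith))
      (Real.rpow_le_rpow hx hxy (by linarith))
  have hμnn : ∀ {t : ℝ}, 0 ≤ t → 0 ≤ μ t := fun ht =>
    le_min (Real.rpow_nonneg ht _) (Real.rpow_nonneg ht _)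
  have hmnn : ∀ {t : ℝ}, 0 ≤ t → 0 ≤ m t := fun ht =>
    le_min (Real.rpow_nonneg ht _) (Real.rpow_nonneg ht _)
  have hμm : ∀ t : ℝ, 0 ≤ t → μ t = t * m t := by
    intro t ht
    rcases eq_or_lt_of_le ht with h0 | h0
    · simp only [hμdef, hmdef, ← h0]
      rw [Real.zero_rpow (by linarith : p - 1 ≠ 0), Real.zero_rpow (by linarith : q - 1 ≠ 0)]
      simp
    · simp only [hμdef, hmdef]
      have e1 : t ^ (p-1) = t * t ^ (p-2) := by
        rw [show p - 1 = 1 + (p-2) by ring, Real.rpow_add h0, Real.rpow_one]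
      have e2 : t ^ (q-1) = t * t ^ (q-2) := by
        rw [show q - 1 = 1 + (q-2) by ring, Real.rpow_add h0, Real.rpow_one]
      rw [e1, e2]
      rcases le_total (t ^ (p-2)) (t ^ (q-2)) with h | h
      · rw [min_eq_left (mul_le_mul_of_nonneg_left h ht), min_eq_left h]
      · rw [min_eq_right (mul_le_mul_of_nonneg_left h ht), min_eq_right h]
  have hmulmin : ∀ r : ℝ, 0 < r → m r * r ^ 2 = min (r ^ p) (r ^ q) := by
    intro r hr
    have e1 : r ^ (p-2) * r ^ 2 = r ^ p := by
      rw [← Real.rpow_natCast r 2, ← Real.rpow_add hr]; norm_num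
    have e2 : r ^ (q-2) * r ^ 2 = r ^ q := by
      rw [← Real.rpow_natCast r 2, ← Real.rpow_add hr]; norm_num
    rcases le_total r 1 with h | h
    · rw [hmlow r hr.le h,
        min_eq_right (Real.rpow_le_rpow_of_exponent_ge hr h (le_of_lt hpq)), e2]
    · rw [hmhigh r h,
        min_eq_left (Real.rpow_le_rpow_of_exponent_le h (le_of_lt hpq)), e1]
  have hscale : ∀ k K r e e' : ℝ, 0 ≤ r → 0 < k → 0 < K → k ^ e ≤ K → k ^ e' ≤ K →
      min (r ^ e) (r ^ e') / K ≤ min ((r / k) ^ e) ((r / k) ^ e') := by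
    intro k K r e e' hr hk hK h1 h2
    rw [Real.div_rpow hr hk.le e, Real.div_rpow hr hk.le e', ← min_div_div_right hK.le]
    exact min_le_min (div_le_div_of_le_den (Real.rpow_nonneg hr e) (Real.rpow_pos_of_pos hk e) h1)
      (div_le_div_of_le_den (Real.rpow_nonneg hr e') (Real.rpow_pos_of_pos hk e') h2)
  -- derivative of f at positive points
  have hd : ∀ t : ℝ, 0 < t → HasDerivAt f (c * q * μ t) t := by
    intro t ht
    rcases lt_trichotomy t 1 with h1 | h1 | h1
    · have hev : f =ᶠ[nhds t] fun x => c * x ^ q := by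
        filter_upwards [Ioo_mem_nhds ht h1] with z hz
        exact hf₂ z hz.1.le hz.2.le
      have hD : HasDerivAt (fun x : ℝ => c * x ^ q) (c * (q * t ^ (q-1))) t :=
        (Real.hasDerivAt_rpow_const (Or.inl ht.ne')).const_mul c
      have hv : c * q * μ t = c * (q * t ^ (q-1)) := by
        rw [hμlow t ht.le h1.le]; ring
      rw [hv]
      exact hD.congr_of_eventuallyEq hev
    · subst h1
      have hv : c * q * μ 1 = c * q := by
        simp [hμdef, Real.one_rpow]
      rw [hv]
      have hf1 : f 1 = c := by
        rw [hf₂ 1 zero_le_one le_rfl, Real.one_rpow, mul_one]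
      have hIic : HasDerivWithinAt f (c*q) (Icc (0:ℝ) 1) 1 := by
        have hD : HasDerivAt (fun x : ℝ => c * x ^ q) (c*q) 1 := by
          have h := (Real.hasDerivAt_rpow_const (p := q) (Or.inl one_ne_zero)).const_mul c
          simpa [Real.one_rpow] using h
        exact hD.hasDerivWithinAt.congr (fun z hz => hf₂ z hz.1 hz.2)
          (by rw [hf1, Real.one_rpow, mul_one])
      have hIci : HasDerivWithinAt f (c*q) (Ici (1:ℝ)) 1 := by
        have hD : HasDerivAt (fun x : ℝ => a * x ^ p + b) (c*q) 1 := by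
          have h := ((Real.hasDerivAt_rpow_const (p := p) (Or.inl one_ne_zero)).const_mul a).add_const b
          rw [Real.one_rpow, mul_one, hapcq] at h
          exact h
        refine hD.hasDerivWithinAt.congr ?_ ?_
        · intro z hz
          rcases eq_or_lt_of_le (mem_Ici.mp hz) with h | h
          · rw [← h, hf1, Real.one_rpow, mul_one]; linarith
          · exact hf₁ z h
        · rw [hf1, Real.one_rpow, mul_one]; linarith
      have hu := hIic.union hIci
      rw [Icc_union_Ici_eq_Ici zero_le_one] at hu
      exact hu.hasDerivAt (Ici_mem_nhds one_pos)
    · have hev : f =ᶠ[nhds t] fun x => a * x ^ p + b := by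
        filter_upwards [Ioi_mem_nhds h1] with z hz
        exact hf₁ z hz
      have hD : HasDerivAt (fun x : ℝ => a * x ^ p + b) (a * (p * t ^ (p-1))) t :=
        ((Real.hasDerivAt_rpow_const (Or.inl ht.ne')).const_mul a).add_const b
      have hv : c * q * μ t = a * (p * t ^ (p-1)) := by
        rw [hμhigh t h1.le, ← hapcq]; ring
      rw [hv]
      exact hD.congr_of_eventuallyEq hev
  have hcont : ∀ t : ℝ, 0 ≤ t → ContinuousWithinAt f (Ici 0) t := by
    intro t ht
    rcases eq_or_lt_of_le ht with h0 | h0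
    · have hg : ContinuousWithinAt (fun z : ℝ => c * z ^ q) (Ici 0) t :=
        (continuousAt_const.mul (Real.continuousAt_rpow_const t q (Or.inr hq0.le))).continuousWithinAt
      refine hg.congr_of_eventuallyEq ?_ ?_
      · have hm1 : Iio (1:ℝ) ∈ nhdsWithin t (Ici (0:ℝ)) := by
          apply mem_nhdsWithin_of_mem_nhds
          exact Iio_mem_nhds (by linarith)
        filter_upwards [hm1, self_mem_nhdsWithin] with z hz1 hz2
        exact hf₂ z hz2 hz1.le
      · exact hf₂ t ht (by linarith)
    · exact (hd t h0).continuousAt.continuousWithinAt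
  have htan : ∀ u w : ℝ, 0 ≤ u → 0 ≤ w → f u + c * q * μ u * (w - u) ≤ f w := by
    intro u w hu hw
    rcases lt_trichotomy u w with h | h | h
    · obtain ⟨ξ, hξ, hslope⟩ := exists_hasDerivAt_eq_slope f (fun z => c*q*μ z) h
        (fun z hz => (hcont z (hu.trans hz.1)).mono (fun z' hz' => hu.trans hz'.1))
        (fun z hz => hd z (lt_of_le_of_lt hu hz.1))
      have heq : f w - f u = c*q*μ ξ * (w - u) :=
        (div_eq_iff (by linarith : w - u ≠ 0)).mp hslope.symm
      have hμξ : μ u ≤ μ ξ := hμmono hu hξ.1.le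
      nlinarith [mul_le_mul_of_nonneg_right (mul_le_mul_of_nonneg_left hμξ hA.le)
        (by linarith : (0:ℝ) ≤ w - u)]
    · rw [h]; simp
    · obtain ⟨ξ, hξ, hslope⟩ := exists_hasDerivAt_eq_slope f (fun z => c*q*μ z) h
        (fun z hz => (hcont z (hw.trans hz.1)).mono (fun z' hz' => hw.trans hz'.1))
        (fun z hz => hd z (lt_of_le_of_lt hw hz.1))
      have heq : f u - f w = c*q*μ ξ * (u - w) :=
        (div_eq_iff (by linarith : u - w ≠ 0)).mp hslope.symm
      have hμξ : μ ξ ≤ μ u := hμmono (hw.trans hξ.1.le) hξ.2.le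
      nlinarith [mul_le_mul_of_nonneg_right (mul_le_mul_of_nonneg_left hμξ hA.le)
        (by linarith : (0:ℝ) ≤ u - w)]
  have hBreg : ∀ s t : ℝ, 0 ≤ s → 0 ≤ t →
      c*q / 2^(3*q) * min (|s-t| ^ p) (|s-t| ^ q) ≤ f s - f t - c*q*μ t*(s-t) := by
    intro s t hs ht
    set δ := |s - t| with hδdef
    have hδ0 : 0 ≤ δ := abs_nonneg _
    rcases eq_or_lt_of_le hδ0 with h0 | h0
    · have hst : s = t := by
        have := abs_eq_zero.mp h0.symm
        linarith [this]
      rw [← h0, Real.zero_rpow (ne_of_gt hp0), Real.zero_rpow (ne_of_gt hq0), min_self, mul_zero]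
      rw [hst]
      simp
    · obtain ⟨U, M, hU0, hUM, hMge, hkey⟩ :
          ∃ U M : ℝ, 0 ≤ U ∧ M = U + δ/2 ∧ δ/2 ≤ M ∧
            c*q*(μ M - μ U)*(δ/2) ≤ f s - f t - c*q*μ t*(s-t) := by
        rcases le_total t s with h | h
        · have hδeq : δ = s - t := abs_of_nonneg (by linarith)
          refine ⟨t, (s+t)/2, ht, by rw [hδeq]; ring, by linarith, ?_⟩
          have h1 := htan t ((s+t)/2) ht (by linarith)
          have h2 := htan ((s+t)/2) s (by linarith) hs
          rw [hδeq]
          nlinarith [h1, h2]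
        · have hδeq : δ = t - s := by rw [hδdef, abs_of_nonpos (by linarith)]; ring
          refine ⟨(s+t)/2, t, by linarith, by rw [hδeq]; ring, by linarith, ?_⟩
          have h1 := htan t ((s+t)/2) ht (by linarith)
          have h2 := htan ((s+t)/2) s (by linarith) hs
          rw [hδeq]
          nlinarith [h1, h2]
      have hδ2 : (0:ℝ) ≤ δ/2 := by linarith
      have hM0 : 0 ≤ M := le_trans hδ2 hMge
      have hMU : M - U = δ/2 := by rw [hUM]; ring
      have hUleM : U ≤ M := by rw [hUM]; linarith
      have bp := bern_aux (show (1:ℝ) ≤ p - 1 by linarith) hU0 hUleM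
      rw [show p - 1 - 1 = p - 2 by ring, hMU] at bp
      have bq := bern_aux (show (1:ℝ) ≤ q - 1 by linarith) hU0 hUleM
      rw [show q - 1 - 1 = q - 2 by ring, hMU] at bq
      have hμdiff : m M * (δ/2) / 2^q ≤ μ M - μ U := by
        rcases le_total (M^(p-1)) (M^(q-1)) with hc1 | hc1
        · have hμM : μ M = M^(p-1) := min_eq_left hc1
          have hμU : μ U ≤ U^(p-1) := min_le_left _ _
          have e2 : m M * (δ/2) / 2^q ≤ M^(p-2)*(δ/2)/2^(p-1) := by
            have i1 : m M * (δ/2) ≤ M^(p-2)*(δ/2) :=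
              mul_le_mul_of_nonneg_right (min_le_left _ _) hδ2
            have i2 : m M * (δ/2) / 2^q ≤ m M * (δ/2) / 2^(p-1) :=
              div_le_div_of_le_den (mul_nonneg (hmnn hM0) hδ2) (pos2 (p-1)) (H (by linarith))
            calc m M * (δ/2) / 2^q ≤ m M * (δ/2) / 2^(p-1) := i2
              _ ≤ M^(p-2)*(δ/2)/2^(p-1) := (div_le_div_iff_of_pos_right (pos2 (p-1))).mpr i1
          linarith [e2.trans bp]
        · have hμM : μ M = M^(q-1) := min_eq_right hc1
          have hμU : μ U ≤ U^(q-1) := min_le_right _ _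
          have e2 : m M * (δ/2) / 2^q ≤ M^(q-2)*(δ/2)/2^(q-1) := by
            have i1 : m M * (δ/2) ≤ M^(q-2)*(δ/2) :=
              mul_le_mul_of_nonneg_right (min_le_right _ _) hδ2
            have i2 : m M * (δ/2) / 2^q ≤ m M * (δ/2) / 2^(q-1) :=
              div_le_div_of_le_den (mul_nonneg (hmnn hM0) hδ2) (pos2 (q-1)) (H (by linarith))
            calc m M * (δ/2) / 2^q ≤ m M * (δ/2) / 2^(q-1) := i2
              _ ≤ M^(q-2)*(δ/2)/2^(q-1) := (div_le_div_iff_of_pos_right (pos2 (q-1))).mpr i1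
          linarith [e2.trans bq]
      -- now combine
      have hN0 : 0 < min (δ^(p-2)) (δ^(q-2)) :=
        lt_min (Real.rpow_pos_of_pos h0 _) (Real.rpow_pos_of_pos h0 _)
      have k1 : min (δ^(p-2)) (δ^(q-2)) / 2^q ≤ m M := by
        have h1 := hscale 2 (2^q) δ (p-2) (q-2) hδ0 two_pos (pos2 q) (H (by linarith)) (H (by linarith))
        have h2 : min ((δ/2)^(p-2)) ((δ/2)^(q-2)) ≤ m M :=
          min_le_min (Real.rpow_le_rpow hδ2 hMge (by linarith))
            (Real.rpow_le_rpow hδ2 hMge (by linarith))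
        exact h1.trans h2
      have k2 : min (δ^(p-2)) (δ^(q-2)) / 2^q * (δ/2) / 2^q ≤ μ M - μ U := by
        refine le_trans ?_ hμdiff
        exact (div_le_div_iff_of_pos_right (pos2 q)).mpr (mul_le_mul_of_nonneg_right k1 hδ2)
      have hNδ : min (δ^(p-2)) (δ^(q-2)) * δ^2 = min (δ^p) (δ^q) := by
        have := hmulmin δ h0
        simp only [hmdef] at this
        exact this
      have hnum : 0 < c*q*min (δ^(p-2)) (δ^(q-2))*δ^2 :=
        mul_pos (mul_pos hA hN0) (pow_pos h0 2)
      have h3q : (2:ℝ)^(3*q) = 2^q*2^q*2^q := by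
        rw [show 3*q = q + q + q by ring, Real.rpow_add two_pos, Real.rpow_add two_pos]
      have step1 : c*q/2^(3*q) * min (δ^p) (δ^q) ≤ c*q*min (δ^(p-2)) (δ^(q-2))*δ^2/(2^q*2^q*4) := by
        rw [← hNδ, show c*q/2^(3*q)*(min (δ^(p-2)) (δ^(q-2))*δ^2)
          = c*q*min (δ^(p-2)) (δ^(q-2))*δ^2/2^(3*q) by ring]
        apply div_le_div_of_le_den hnum.le (by positivity)
        rw [h3q]
        nlinarith [pos2 q, h4]
      have step2 : c*q*min (δ^(p-2)) (δ^(q-2))*δ^2/(2^q*2^q*4) ≤ c*q*(μ M - μ U)*(δ/2) := by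
        have h := mul_le_mul_of_nonneg_right (mul_le_mul_of_nonneg_left k2 hA.le) hδ2
        calc c*q*min (δ^(p-2)) (δ^(q-2))*δ^2/(2^q*2^q*4)
            = c*q*(min (δ^(p-2)) (δ^(q-2)) / 2^q * (δ/2) / 2^q)*(δ/2) := by ring
          _ ≤ c*q*(μ M - μ U)*(δ/2) := h
      exact step1.trans (step2.trans hkey)
  have hscalar : ∀ s t r : ℝ, 0 ≤ s → 0 ≤ t → |s - t| ≤ r → r ≤ s + t →
      c*q/2^(5*q) * min (r^p) (r^q) ≤
        (f s - f t - c*q*μ t*(s-t)) + c*q*m t*(r^2 - (s-t)^2)/2 := by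
    intro s t r hs ht hδr hrst
    have habs : (0:ℝ) ≤ |s-t| := abs_nonneg _
    have hr0 : 0 ≤ r := habs.trans hδr
    have hmt0 : 0 ≤ m t := hmnn ht
    have hB := hBreg s t hs ht
    have hminst : 0 ≤ min (|s-t|^p) (|s-t|^q) :=
      le_min (Real.rpow_nonneg habs _) (Real.rpow_nonneg habs _)
    have hminr : 0 ≤ min (r^p) (r^q) := le_min (Real.rpow_nonneg hr0 _) (Real.rpow_nonneg hr0 _)
    have hBnn : 0 ≤ f s - f t - c*q*μ t*(s-t) :=
      le_trans (mul_nonneg (by positivity) hminst) hB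
    have hsq : (s-t)^2 ≤ r^2 := by nlinarith [sq_abs (s-t)]
    have hterm0 : 0 ≤ c*q*m t*(r^2-(s-t)^2)/2 := by
      apply div_nonneg _ (by norm_num)
      exact mul_nonneg (mul_nonneg hA.le hmt0) (by linarith)
    rcases le_or_gt (r/2) (|s-t|) with hcase | hcase
    · have h1 : min ((r/2)^p) ((r/2)^q) ≤ min (|s-t|^p) (|s-t|^q) :=
        min_le_min (Real.rpow_le_rpow (by linarith) hcase hp0.le)
          (Real.rpow_le_rpow (by linarith) hcase hq0.le)
      have h2 := hscale 2 (2^q) r p q hr0 two_pos (pos2 q) (H (by linarith)) (H le_rfl)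
      have h3 : min (r^p) (r^q)/2^q ≤ min (|s-t|^p) (|s-t|^q) := h2.trans h1
      have h4' := mul_le_mul_of_nonneg_left h3 (show (0:ℝ) ≤ c*q/2^(3*q) by positivity)
      have h5 : c*q/2^(5*q)*min (r^p) (r^q) ≤ c*q/2^(3*q)*(min (r^p) (r^q)/2^q) := by
        have e2 : (2:ℝ)^(3*q)*2^q = 2^(4*q) := by
          rw [← Real.rpow_add two_pos, show 3*q + q = 4*q by ring]
        rw [show c*q/2^(3*q)*(min (r^p) (r^q)/2^q) = c*q*min (r^p) (r^q)/(2^(3*q)*2^q) by ring,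
          e2, show c*q/2^(5*q)*min (r^p) (r^q) = c*q*min (r^p) (r^q)/2^(5*q) by ring]
        exact div_le_div_of_le_den (mul_nonneg hA.le hminr) (pos2 (4*q)) (H (by linarith))
      linarith [h5, h4', hB, hterm0]
    · have hrpos : 0 < r := by linarith
      have htr : r/4 ≤ t := by
        have h1 : s - t ≤ |s - t| := le_abs_self _
        linarith
      have hNr0 : 0 ≤ min (r^(p-2)) (r^(q-2)) :=
        le_min (Real.rpow_nonneg hr0 _) (Real.rpow_nonneg hr0 _)
      have hmt : min (r^(p-2)) (r^(q-2)) / 2^(2*q) ≤ m t := by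
        have h1 : min ((r/4)^(p-2)) ((r/4)^(q-2)) ≤ m t :=
          min_le_min (Real.rpow_le_rpow (by linarith) htr (by linarith))
            (Real.rpow_le_rpow (by linarith) htr (by linarith))
        have h2 := hscale 4 (2^(2*q)) r (p-2) (q-2) hr0 (by norm_num) (pos2 _)
          (h42 (p-2) (by linarith) (by linarith)) (h42 (q-2) (by linarith) (by linarith))
        exact h2.trans h1
      have hsq2 : r^2/2 ≤ r^2 - (s-t)^2 := by nlinarith [sq_abs (s-t), habs]
      have hNP : min (r^(p-2)) (r^(q-2)) * r^2 = min (r^p) (r^q) := by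
        have := hmulmin r hrpos
        simp only [hmdef] at this
        exact this
      have hterm : c*q*(min (r^(p-2)) (r^(q-2))/2^(2*q))*(r^2/2)/2 ≤ c*q*m t*(r^2-(s-t)^2)/2 := by
        apply (div_le_div_iff_of_pos_right two_pos).mpr
        exact mul_le_mul (mul_le_mul_of_nonneg_left hmt hA.le) hsq2 (by positivity)
          (mul_nonneg hA.le hmt0)
      have hfin : c*q/2^(5*q)*min (r^p) (r^q)
          ≤ c*q*(min (r^(p-2)) (r^(q-2))/2^(2*q))*(r^2/2)/2 := by
        rw [show c*q*(min (r^(p-2)) (r^(q-2))/2^(2*q))*(r^2/2)/2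
            = c*q*(min (r^(p-2)) (r^(q-2))*r^2)/(2^(2*q)*4) by ring, hNP,
          show c*q/2^(5*q)*min (r^p) (r^q) = c*q*min (r^p) (r^q)/2^(5*q) by ring]
        apply div_le_div_of_le_den (mul_nonneg hA.le hminr) (by positivity)
        have e1 : (2:ℝ)^(5*q) = 2^(2*q)*2^(3*q) := by
          rw [← Real.rpow_add two_pos, show 2*q+3*q = 5*q by ring]
        have h8 : (4:ℝ) ≤ 2^(3*q) := le_trans h4 (H (by linarith))
        nlinarith [pos2 (2*q)]
      linarith [hfin, hterm, hBnn]
  -- gradient of the radial function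
  have hkey : ∀ (y : EuclideanSpace ℝ (Fin n)) (r : ℝ)
      (g : EuclideanSpace ℝ (Fin n) → ℝ),
      HasFDerivAt g (r • innerSL ℝ y) y → HasGradientAt g (r • y) y := by
    intro y r g h
    have he : InnerProductSpace.toDual ℝ (EuclideanSpace ℝ (Fin n)) (r • y) = r • innerSL ℝ y := by
      ext w
      simp [real_inner_smul_left]
    rw [hasGradientAt_iff_hasFDerivAt, he]
    exact h
  have hlowz : ∀ z : EuclideanSpace ℝ (Fin n), ‖z‖ ≤ 1 → f ‖z‖ = c * ‖z‖ ^ q :=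
    fun z hz => hf₂ _ (norm_nonneg z) hz
  have hhighz : ∀ z : EuclideanSpace ℝ (Fin n), 1 ≤ ‖z‖ → f ‖z‖ = a * ‖z‖ ^ p + b := by
    intro z hz
    rcases eq_or_lt_of_le hz with h1 | h1
    · rw [← h1, hf₂ 1 zero_le_one le_rfl, Real.one_rpow, Real.one_rpow]
      linarith
    · exact hf₁ _ h1
  have hgrad : ∀ y : EuclideanSpace ℝ (Fin n),
      HasGradientAt (fun z : EuclideanSpace ℝ (Fin n) => f ‖z‖) ((c * q * m ‖y‖) • y) y := by
    intro y
    have hbq : HasFDerivAt (fun z : EuclideanSpace ℝ (Fin n) => c * ‖z‖ ^ q)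
        ((c * (q * ‖y‖ ^ (q-2))) • innerSL ℝ y) y := by
      have h := (hasFDerivAt_norm_rpow y hq1).const_smul c
      rw [smul_smul] at h
      exact h
    have hbp : HasFDerivAt (fun z : EuclideanSpace ℝ (Fin n) => a * ‖z‖ ^ p + b)
        ((a * (p * ‖y‖ ^ (p-2))) • innerSL ℝ y) y := by
      have h := ((hasFDerivAt_norm_rpow y hp1).const_smul a).add_const b
      simpa [smul_smul, smul_eq_mul] using h
    rcases lt_trichotomy ‖y‖ 1 with hy1 | hy1 | hy1
    · have hv : c * q * m ‖y‖ = c * (q * ‖y‖ ^ (q-2)) := by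
        rw [hmlow _ (norm_nonneg y) hy1.le]; ring
      rw [hv]
      apply hkey
      apply hbq.congr_of_eventuallyEq
      have hopen : {z : EuclideanSpace ℝ (Fin n) | ‖z‖ < 1} ∈ nhds y :=
        (isOpen_lt continuous_norm continuous_const).mem_nhds hy1
      filter_upwards [hopen] with z hz
      exact hlowz z (le_of_lt hz)
    · have hv : c * q * m ‖y‖ = c * q := by
        rw [hy1]
        simp [hmdef, Real.one_rpow]
      rw [hv]
      apply hkey
      have h₁ : HasFDerivWithinAt (fun z : EuclideanSpace ℝ (Fin n) => f ‖z‖)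
          ((c*q) • innerSL ℝ y) {z : EuclideanSpace ℝ (Fin n) | ‖z‖ ≤ 1} y := by
        have hval : (c * (q * ‖y‖ ^ (q-2))) = c*q := by rw [hy1, Real.one_rpow]; ring
        rw [← hval]
        exact hbq.hasFDerivWithinAt.congr (fun z hz => hlowz z hz) (hlowz y hy1.le)
      have h₂ : HasFDerivWithinAt (fun z : EuclideanSpace ℝ (Fin n) => f ‖z‖)
          ((c*q) • innerSL ℝ y) {z : EuclideanSpace ℝ (Fin n) | 1 ≤ ‖z‖} y := by
        have hval : (a * (p * ‖y‖ ^ (p-2))) = c*q := by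
          rw [hy1, Real.one_rpow, ← hapcq]; ring
        rw [← hval]
        exact hbp.hasFDerivWithinAt.congr (fun z hz => hhighz z hz) (hhighz y hy1.ge)
      have hu := h₁.union h₂
      have huniv : {z : EuclideanSpace ℝ (Fin n) | ‖z‖ ≤ 1}
          ∪ {z : EuclideanSpace ℝ (Fin n) | 1 ≤ ‖z‖} = univ := by
        ext z; simp [le_total]
      rw [huniv] at hu
      exact hasFDerivWithinAt_univ.mp hu
    · have hv : c * q * m ‖y‖ = a * (p * ‖y‖ ^ (p-2)) := by
        rw [hmhigh _ hy1.le, ← hapcq]; ring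
      rw [hv]
      apply hkey
      apply hbp.congr_of_eventuallyEq
      have hopen : {z : EuclideanSpace ℝ (Fin n) | 1 < ‖z‖} ∈ nhds y :=
        (isOpen_lt continuous_const continuous_norm).mem_nhds hy1
      filter_upwards [hopen] with z hz
      exact hhighz z (le_of_lt hz)
  -- assembly
  refine ⟨c*q / 2^(5*q), by positivity, ?_⟩
  intro x y
  rw [(hgrad y).gradient]
  have hinner : ⟪(c*q*m ‖y‖) • y, x - y⟫ = c*q*m ‖y‖ * (⟪y,x⟫ - ‖y‖^2) := by
    rw [real_inner_smul_left, inner_sub_right, real_inner_self_eq_norm_sq]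
  have hyx : ⟪y,x⟫ = (‖x‖^2 + ‖y‖^2 - ‖x-y‖^2)/2 := by
    have h1 := norm_sub_sq_real x y
    have h2 : ⟪y,x⟫ = ⟪x,y⟫ := real_inner_comm x y
    linarith
  have h1 := hscalar ‖x‖ ‖y‖ ‖x-y‖ (norm_nonneg x) (norm_nonneg y)
    (abs_norm_sub_norm_le x y) (norm_sub_le x y)
  rw [ge_iff_le, hinner, hyx]
  have hμmt := hμm ‖y‖ (norm_nonneg y)
  have hid : f ‖x‖ - f ‖y‖ - c*q*m ‖y‖*((‖x‖^2+‖y‖^2-‖x-y‖^2)/2 - ‖y‖^2)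
      = (f ‖x‖ - f ‖y‖ - c*q*μ ‖y‖*(‖x‖-‖y‖)) + c*q*m ‖y‖*(‖x-y‖^2 - (‖x‖-‖y‖)^2)/2 := by
    rw [hμmt]; ring
  rw [hid]
  exact h1
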